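/- Let p be an odd prime, ζ_p a primitive p-th root of unity, h = 1 - ζ_p, and d = (p-1)/2. Suppose D ∈ ℤ[ζ_p] (or ℤ[ζ_{4p}] when p ≡ 1 mod 4) satisfies D^2 = -p / (ζ_p - ζ_p^{-1})^2. Then D is a unit times h^{d-1}. -/

import Mathlib

open Polynomial in
/-- Any two primitive `n`-th roots of unity give associated `1 - ζ`. -/
lemma aux_assoc {O : Type*} [CommRing O] [IsDomain O] {n : ℕ} (hn : 0 < n)
    {a b : O} (ha : IsPrimitiveRoot a n) (hb : IsPrimitiveRoot b n) :
    Associated (1 - a) (1 - b) := by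
  have key : ∀ {x y : O}, IsPrimitiveRoot x n → IsPrimitiveRoot y n → (1 - x) ∣ (1 - y) := by
    intro x y hx hy
    have : NeZero n := ⟨hn.ne'⟩
    obtain ⟨k, -, hk⟩ := hx.eq_pow_of_pow_eq_one hy.pow_eq_one
    refine ⟨∑ i ∈ Finset.range k, x ^ i, ?_⟩
    have := geom_sum_mul x k
    rw [← hk]
    linear_combination this
  exact associated_of_dvd_dvd (key ha hb) (key hb ha)

open Polynomial in
/-- `p` is associated to `(1 - ζ)^(p-1)` for `ζ` a primitive `p`-th root. -/
lemma aux_p_assoc {O : Type*} [CommRing O] [IsDomain O] {p : ℕ} (hp : p.Prime)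
    {z : O} (hz : IsPrimitiveRoot z p) :
    Associated ((p : ℕ) : O) ((1 - z) ^ (p - 1)) := by
  have : Fact p.Prime := ⟨hp⟩
  have h1 : ((p : ℕ) : O) = ∏ μ ∈ primitiveRoots p O, (1 - μ) := by
    have := eval_one_cyclotomic_prime (R := O) (p := p)
    rw [cyclotomic_eq_prod_X_sub_primitiveRoots hz] at this
    rw [← this]
    simp [eval_prod]
  have hcard : (primitiveRoots p O).card = p - 1 := by
    rw [hz.card_primitiveRoots, Nat.totient_prime hp]
  rw [h1, ← hcard, ← Finset.prod_const]
  exact Associated.prod _ _ _ fun μ hμ =>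
    aux_assoc hp.pos ((mem_primitiveRoots hp.pos).mp hμ) hz

theorem stmt_4 (O : Type*) [CommRing O] [IsDomain O] [IsIntegrallyClosed O]
    (p : ℕ) (hp : p.Prime) (hodd : Odd p) (ζ : Oˣ) (hζ : IsPrimitiveRoot ζ p)
    (D : O) (hD : D ^ 2 * ((ζ : O) - ((ζ⁻¹ : Oˣ) : O)) ^ 2 = -(p : O)) :
    ∃ u : Oˣ, D = (u : O) * (1 - (ζ : O)) ^ ((p - 1) / 2 - 1) := by
  have hz : IsPrimitiveRoot (ζ : O) p := IsPrimitiveRoot.coe_units_iff.mpr hζ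
  obtain ⟨t, ht⟩ := id hodd
  have hp2 := hp.two_le
  have hp3 : 3 ≤ p := by omega
  set z : O := (ζ : O) with hzdef
  set zi : O := ((ζ⁻¹ : Oˣ) : O) with hzidef
  have hne : (1 : O) - z ≠ 0 := sub_ne_zero_of_ne (hz.ne_one (by omega)).symm
  have hinv : z * zi = 1 := by
    rw [hzdef, hzidef, ← Units.val_mul, mul_inv_cancel, Units.val_one]
  -- z^2 is also a primitive p-th root
  have hcop : Nat.Coprime 2 p :=
    Nat.coprime_comm.mp (hp.coprime_iff_not_dvd.mpr
      (fun hdvd => by have := Nat.le_of_dvd (by norm_num) hdvd; omega))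
  have hz2 : IsPrimitiveRoot (z ^ 2) p := hz.pow_of_coprime 2 hcop
  obtain ⟨u₁, hu₁⟩ := aux_assoc hp.pos hz2 hz
  obtain ⟨w, hw⟩ := aux_p_assoc hp hz
  -- key identity after rewriting ζ - ζ⁻¹ and p in terms of 1 - z
  have e1' : (1 - z ^ 2) ^ 2 = (z - zi) ^ 2 * z ^ 2 := by
    linear_combination (2 * (z ^ 2 - 1) - (z * zi - 1)) * hinv
  have e2 : (1 - z ^ 2) ^ 2 * (↑u₁ : O) ^ 2 = (1 - z) ^ 2 := by
    rw [← mul_pow, hu₁]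
  have key : D ^ 2 * (1 - z) ^ 2 * (↑w : O)
      = -((1 - z) ^ (p - 1)) * (z ^ 2 * (↑u₁ : O) ^ 2) := by
    linear_combination (-(D ^ 2 * (↑w : O))) * e2
      + (D ^ 2 * (↑w : O) * (↑u₁ : O) ^ 2) * e1'
      + ((↑w : O) * z ^ 2 * (↑u₁ : O) ^ 2) * hD
      + (-(z ^ 2 * (↑u₁ : O) ^ 2)) * hw
  have hsplit : (1 - z) ^ (p - 1) = (1 - z) ^ (p - 3) * (1 - z) ^ 2 := by
    rw [← pow_add]; congr 1; omega
  rw [hsplit] at key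
  have hcancel : D ^ 2 * (↑w : O) = (1 - z) ^ (p - 3) * (-(z ^ 2 * (↑u₁ : O) ^ 2)) :=
    mul_left_cancel₀ (pow_ne_zero 2 hne) (by linear_combination key)
  set e : Oˣ := -(ζ ^ 2 * u₁ ^ 2 * w⁻¹) with hedef
  have hew : (↑e : O) * (↑w : O) = -(z ^ 2 * (↑u₁ : O) ^ 2) := by
    rw [hedef]
    push_cast
    have hwi : (↑w⁻¹ : O) * ↑w = 1 := w.inv_mul
    linear_combination (-(z ^ 2 * (↑u₁ : O) ^ 2)) * hwi
  have he : D ^ 2 = (1 - z) ^ (p - 3) * (↑e : O) :=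
    mul_right_cancel₀ w.ne_zero (by linear_combination hcancel - (1 - z) ^ (p - 3) * hew)
  set m : ℕ := (p - 1) / 2 - 1 with hmdef
  have hm : p - 3 = m * 2 := by omega
  rw [hm, pow_mul] at he
  have hdvd : (1 - z) ^ m ∣ D :=
    (IsIntegrallyClosed.pow_dvd_pow_iff (n := 2) two_ne_zero).mp ⟨(↑e : O), he⟩
  obtain ⟨c, hc⟩ := hdvd
  have hce : c ^ 2 = (↑e : O) :=
    mul_left_cancel₀ (pow_ne_zero 2 (pow_ne_zero m hne)) (by rw [← mul_pow, ← hc]; linear_combination he)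
  have hcu : IsUnit c := IsUnit.of_mul_eq_one (c * (↑e⁻¹ : O)) (by
    have := e.mul_inv
    linear_combination (↑e⁻¹ : O) * hce + this)
  exact ⟨hcu.unit, by rw [hcu.unit_spec, hc]; ring⟩
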